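/- arXiv:1208.2463 — 3 statements merged into one kernel-verified Lean document; each statement's English description precedes it below -/
import Mathlib

section
/- Let T be a semistable decorated directed tree and let T' be obtained from T by contracting a contractible edge uv, merging u and v into a vertex p. Then an edge e of T' (corresponding to an edge e ≠ uv of T) is contractible in T' if and only if e is contractible in T. -/
open Relation

/-- A decorated directed tree datum: a finite directed multigraph together with,
at each vertex, a number of outward and inward external legs. -/
structure DecTree where
  V : Type
  E : Type
  [hV : Finite V]
  [hE : Finite E]
  src : E → V
  tgt : E → V
  legOut : V → ℕ
  legIn : V → ℕ

attribute [instance] DecTree.hV DecTree.hE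

namespace DecTree

/-- Outward degree: outgoing edge-ends plus outward external legs. -/
noncomputable def degOut (T : DecTree) (v : T.V) : ℕ :=
  Nat.card {e : T.E // T.src e = v} + T.legOut v

/-- Inward degree: incoming edge-ends plus inward external legs. -/
noncomputable def degIn (T : DecTree) (v : T.V) : ℕ :=
  Nat.card {e : T.E // T.tgt e = v} + T.legIn v

/-- Undirected adjacency of the underlying graph. -/
def UAdj (T : DecTree) (a b : T.V) : Prop :=
  ∃ e : T.E, (T.src e = a ∧ T.tgt e = b) ∨ (T.src e = b ∧ T.tgt e = a)

/-- The underlying graph is a tree: connected with `|V| = |E| + 1`. -/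
def IsTree (T : DecTree) : Prop :=
  (∀ a b : T.V, ReflTransGen T.UAdj a b) ∧ Nat.card T.V = Nat.card T.E + 1

def Semistable (T : DecTree) : Prop :=
  ∀ v : T.V, 1 ≤ T.degIn v ∧ 1 ≤ T.degOut v ∧ 3 ≤ T.degIn v + T.degOut v

def Stable (T : DecTree) : Prop :=
  ∀ v : T.V, 2 ≤ T.degIn v ∧ 2 ≤ T.degOut v

def Contractible (T : DecTree) (e : T.E) : Prop :=
  T.src e ≠ T.tgt e ∧ (T.degOut (T.src e) = 1 ∨ T.degIn (T.tgt e) = 1)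

open Classical in
/-- Contract the edge `e0` (with distinct endpoints): the vertex `tgt e0` is merged
into `src e0`, and the merged vertex inherits all remaining half-edges (edge-ends
and external legs) of both. -/
noncomputable def contract (T : DecTree) (e0 : T.E) (h : T.src e0 ≠ T.tgt e0) : DecTree where
  V := {w : T.V // w ≠ T.tgt e0}
  E := {e : T.E // e ≠ e0}
  src e := if hs : T.src e.1 = T.tgt e0 then ⟨T.src e0, h⟩ else ⟨T.src e.1, hs⟩
  tgt e := if ht : T.tgt e.1 = T.tgt e0 then ⟨T.src e0, h⟩ else ⟨T.tgt e.1, ht⟩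
  legOut w := if w.1 = T.src e0 then T.legOut (T.src e0) + T.legOut (T.tgt e0) else T.legOut w.1
  legIn w := if w.1 = T.src e0 then T.legIn (T.src e0) + T.legIn (T.tgt e0) else T.legIn w.1

end DecTree
section Counting

open Relation

/-- `n`-step reachability, with the step at the head. -/
def Steps {V : Type} (R : V → V → Prop) : ℕ → V → V → Prop
  | 0, a, b => a = b
  | n + 1, a, b => ∃ c, R a c ∧ Steps R n c b

lemma Steps.tail {V : Type} {R : V → V → Prop} :
    ∀ {n : ℕ} {a b c : V}, Steps R n a b → R b c → Steps R (n + 1) a c := by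
  intro n
  induction n with
  | zero =>
      intro a b c hab hbc
      cases hab
      exact ⟨c, hbc, rfl⟩
  | succ n ih =>
      rintro a b c ⟨d, had, hdb⟩ hbc
      exact ⟨d, had, ih hdb hbc⟩

lemma exists_steps_of_rtg {V : Type} {R : V → V → Prop} {a b : V}
    (h : ReflTransGen R a b) : ∃ n, Steps R n a b := by
  induction h with
  | refl => exact ⟨0, rfl⟩
  | tail _ hbc ih =>
      obtain ⟨n, hn⟩ := ih
      exact ⟨n + 1, hn.tail hbc⟩

/-- A connected multigraph satisfies `|V| ≤ |E| + 1`. -/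
lemma card_le_of_connected {V E : Type} [Finite V] [Finite E] (s t : E → V)
    (hconn : ∀ a b : V, ReflTransGen
      (fun a b => ∃ e, (s e = a ∧ t e = b) ∨ (s e = b ∧ t e = a)) a b) :
    Nat.card V ≤ Nat.card E + 1 := by
  classical
  rcases isEmpty_or_nonempty V with hV | ⟨⟨r⟩⟩
  · simp [Nat.card_of_isEmpty]
  set R : V → V → Prop := fun a b => ∃ e, (s e = a ∧ t e = b) ∨ (s e = b ∧ t e = a) with hR
  have hex : ∀ v : V, ∃ n, Steps R n v r := fun v => exists_steps_of_rtg (hconn v r)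
  set d : V → ℕ := fun v => Nat.find (hex v) with hd
  have hsurj : Function.Surjective (fun o : Option E =>
      o.elim r fun e => if d (s e) ≤ d (t e) then t e else s e) := by
    intro w
    by_cases hw : w = r
    · exact ⟨none, hw.symm⟩
    · have hspec : Steps R (d w) w r := Nat.find_spec (hex w)
      have hdw : d w ≠ 0 := by
        intro h0
        rw [h0] at hspec
        exact hw hspec
      obtain ⟨m, hm⟩ := Nat.exists_eq_succ_of_ne_zero hdw
      rw [hm] at hspec
      obtain ⟨c, hwc, hc⟩ := hspec
      have hdc : d c ≤ m := Nat.find_min' (hex c) hc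
      obtain ⟨e, he⟩ := hwc
      refine ⟨some e, ?_⟩
      rcases he with ⟨hs, ht⟩ | ⟨hs, ht⟩
      · have : ¬ d (s e) ≤ d (t e) := by rw [hs, ht]; omega
        simp only [Option.elim, if_neg this]
        exact hs
      · have : d (s e) ≤ d (t e) := by rw [hs, ht]; omega
        simp only [Option.elim, if_pos this]
        exact ht
  have := Fintype.ofFinite E
  have := Fintype.ofFinite V
  have hle := Nat.card_le_card_of_surjective _ hsurj
  simp only [Nat.card_eq_fintype_card, Fintype.card_option] at hle ⊢
  exact hle

end Counting
section Cards

lemma card_cond_aux {E V : Type} [Finite E] (f : E → V) (e0 : E) (w : V) (hw : f e0 ≠ w) :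
    Nat.card {x : E // x ≠ e0 ∧ f x = w} = Nat.card {x : E // f x = w} :=
  Nat.card_congr (Equiv.subtypeEquivRight fun x =>
    ⟨fun hx => hx.2, fun hx => ⟨fun h' => hw (h' ▸ hx), hx⟩⟩)

lemma card_pair_aux {E V : Type} [Finite E] (f : E → V) (e0 : E) (u v : V) (huv : u ≠ v)
    (he0 : f e0 = u ∨ f e0 = v) :
    Nat.card {x : E // x ≠ e0 ∧ (f x = u ∨ f x = v)} + 1
      = Nat.card {x : E // f x = u} + Nat.card {x : E // f x = v} := by
  classical
  have := Fintype.ofFinite E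
  simp only [Nat.card_eq_fintype_card, Fintype.card_subtype]
  have h1 : Finset.filter (fun x => x ≠ e0 ∧ (f x = u ∨ f x = v)) Finset.univ
      = (Finset.filter (fun x => f x = u ∨ f x = v) Finset.univ).erase e0 := by
    ext x
    simp [Finset.mem_erase, and_comm]
  rw [h1, Finset.card_erase_add_one (by simpa using he0), Finset.filter_or,
    Finset.card_union_of_disjoint]
  refine Finset.disjoint_left.mpr ?_
  intro x hx hx'
  simp only [Finset.mem_filter] at hx hx'
  exact huv (hx.2.symm.trans hx'.2)

lemma two_le_card_aux {E V : Type} [Finite E] (f : E → V) {e e' : E} (hne : e ≠ e')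
    (hf : f e = f e') : 2 ≤ Nat.card {x : E // f x = f e'} := by
  classical
  have := Fintype.ofFinite E
  rw [Nat.card_eq_fintype_card, Fintype.card_subtype]
  have hsub : ({e, e'} : Finset E) ⊆ Finset.filter (fun x => f x = f e') Finset.univ := by
    intro x hx
    simp only [Finset.mem_insert, Finset.mem_singleton] at hx
    rcases hx with rfl | rfl <;> simp [hf]
  have hcard := Finset.card_le_card hsub
  rwa [Finset.card_insert_of_notMem (by simp [hne]), Finset.card_singleton] at hcard

end Cards

section NoParallel

open Relation

lemma DecTree.no_parallel (T : DecTree) (hT : T.IsTree) (e f : T.E) (hef : e ≠ f)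
    (hpar : (T.src e = T.src f ∧ T.tgt e = T.tgt f) ∨
      (T.src e = T.tgt f ∧ T.tgt e = T.src f)) : False := by
  classical
  have hconn : ∀ a b : T.V, ReflTransGen (fun a b => ∃ g : {x : T.E // x ≠ e},
      (T.src g.1 = a ∧ T.tgt g.1 = b) ∨ (T.src g.1 = b ∧ T.tgt g.1 = a)) a b := by
    intro a b
    refine ReflTransGen.mono ?_ a b (hT.1 a b)
    rintro x y ⟨g, hg⟩
    by_cases hge : g = e
    · subst hge
      refine ⟨⟨f, Ne.symm hef⟩, ?_⟩
      rcases hpar with ⟨h1, h2⟩ | ⟨h1, h2⟩ <;> rcases hg with ⟨h3, h4⟩ | ⟨h3, h4⟩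
      · exact Or.inl ⟨h1.symm.trans h3, h2.symm.trans h4⟩
      · exact Or.inr ⟨h1.symm.trans h3, h2.symm.trans h4⟩
      · exact Or.inr ⟨h2.symm.trans h4, h1.symm.trans h3⟩
      · exact Or.inl ⟨h2.symm.trans h4, h1.symm.trans h3⟩
    · exact ⟨⟨g, hge⟩, hg⟩
  have hcount := card_le_of_connected (fun g : {x : T.E // x ≠ e} => T.src g.1)
    (fun g => T.tgt g.1) hconn
  have := Fintype.ofFinite T.E
  have hlt : Nat.card {x : T.E // x ≠ e} < Nat.card T.E := by
    rw [Nat.card_eq_fintype_card, Nat.card_eq_fintype_card]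
    exact Fintype.card_subtype_lt (x := e) (by simp)
  have := hT.2
  omega
end NoParallel
namespace DecTree

open Classical in
lemma contract_src_val (T : DecTree) (e0 : T.E) (h : T.src e0 ≠ T.tgt e0)
    (e' : {x : T.E // x ≠ e0}) :
    ((T.contract e0 h).src e').1 = if T.src e'.1 = T.tgt e0 then T.src e0 else T.src e'.1 := by
  by_cases hs : T.src e'.1 = T.tgt e0 <;> simp [contract, hs]

open Classical in
lemma contract_tgt_val (T : DecTree) (e0 : T.E) (h : T.src e0 ≠ T.tgt e0)
    (e' : {x : T.E // x ≠ e0}) :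
    ((T.contract e0 h).tgt e').1 = if T.tgt e'.1 = T.tgt e0 then T.src e0 else T.tgt e'.1 := by
  by_cases hs : T.tgt e'.1 = T.tgt e0 <;> simp [contract, hs]

lemma degOut_contract_ne (T : DecTree) (e0 : T.E) (h : T.src e0 ≠ T.tgt e0)
    (w : T.V) (hwv : w ≠ T.tgt e0) (hwu : w ≠ T.src e0) :
    (T.contract e0 h).degOut ⟨w, hwv⟩ = T.degOut w := by
  unfold degOut
  have hleg : (T.contract e0 h).legOut ⟨w, hwv⟩ = T.legOut w := by
    simp [contract, hwu]
  rw [hleg]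
  congr 1
  have e1 : Nat.card {e' : (T.contract e0 h).E // (T.contract e0 h).src e' = ⟨w, hwv⟩}
      = Nat.card {x : T.E // x ≠ e0 ∧ T.src x = w} := by
    refine Nat.card_congr ((Equiv.subtypeEquivRight ?_).trans
      (Equiv.subtypeSubtypeEquivSubtypeInter (· ≠ e0) (fun x => T.src x = w)))
    intro e'
    refine (Subtype.ext_iff (a1 := (T.contract e0 h).src e') (a2 := ⟨w, hwv⟩)).trans ?_
    refine (iff_of_eq (congrArg (· = w) (contract_src_val T e0 h e'))).trans ?_
    by_cases hs : T.src e'.1 = T.tgt e0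
    · rw [if_pos hs]
      exact iff_of_false (fun hh => hwu hh.symm) (fun hh => (Ne.symm hwv) (hs.symm.trans hh))
    · rw [if_neg hs]
  rw [e1, card_cond_aux T.src e0 w (fun hh => hwu hh.symm)]

lemma degIn_contract_ne (T : DecTree) (e0 : T.E) (h : T.src e0 ≠ T.tgt e0)
    (w : T.V) (hwv : w ≠ T.tgt e0) (hwu : w ≠ T.src e0) :
    (T.contract e0 h).degIn ⟨w, hwv⟩ = T.degIn w := by
  unfold degIn
  have hleg : (T.contract e0 h).legIn ⟨w, hwv⟩ = T.legIn w := by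
    simp [contract, hwu]
  rw [hleg]
  congr 1
  have e1 : Nat.card {e' : (T.contract e0 h).E // (T.contract e0 h).tgt e' = ⟨w, hwv⟩}
      = Nat.card {x : T.E // x ≠ e0 ∧ T.tgt x = w} := by
    refine Nat.card_congr ((Equiv.subtypeEquivRight ?_).trans
      (Equiv.subtypeSubtypeEquivSubtypeInter (· ≠ e0) (fun x => T.tgt x = w)))
    intro e'
    refine (Subtype.ext_iff (a1 := (T.contract e0 h).tgt e') (a2 := ⟨w, hwv⟩)).trans ?_
    refine (iff_of_eq (congrArg (· = w) (contract_tgt_val T e0 h e'))).trans ?_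
    by_cases hs : T.tgt e'.1 = T.tgt e0
    · rw [if_pos hs]
      exact iff_of_false (fun hh => hwu hh.symm) (fun hh => (Ne.symm hwv) (hs.symm.trans hh))
    · rw [if_neg hs]
  rw [e1, card_cond_aux T.tgt e0 w (fun hh => hwv hh.symm)]

lemma degOut_contract_src (T : DecTree) (e0 : T.E) (h : T.src e0 ≠ T.tgt e0) :
    (T.contract e0 h).degOut ⟨T.src e0, h⟩ + 1 = T.degOut (T.src e0) + T.degOut (T.tgt e0) := by
  unfold degOut
  have hleg : (T.contract e0 h).legOut ⟨T.src e0, h⟩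
      = T.legOut (T.src e0) + T.legOut (T.tgt e0) := by
    simp [contract]
  have e1 : Nat.card {e' : (T.contract e0 h).E // (T.contract e0 h).src e' = ⟨T.src e0, h⟩}
      = Nat.card {x : T.E // x ≠ e0 ∧ (T.src x = T.src e0 ∨ T.src x = T.tgt e0)} := by
    refine Nat.card_congr ((Equiv.subtypeEquivRight ?_).trans
      (Equiv.subtypeSubtypeEquivSubtypeInter (· ≠ e0)
        (fun x => T.src x = T.src e0 ∨ T.src x = T.tgt e0)))
    intro e'
    refine (Subtype.ext_iff (a1 := (T.contract e0 h).src e') (a2 := ⟨T.src e0, h⟩)).trans ?_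
    refine (iff_of_eq (congrArg (· = T.src e0) (contract_src_val T e0 h e'))).trans ?_
    by_cases hs : T.src e'.1 = T.tgt e0
    · rw [if_pos hs]
      exact iff_of_true rfl (Or.inr hs)
    · rw [if_neg hs]
      constructor
      · exact Or.inl
      · rintro (hh | hh)
        · exact hh
        · exact absurd hh hs
  have e2 := card_pair_aux T.src e0 (T.src e0) (T.tgt e0) h (Or.inl rfl)
  rw [hleg, e1]
  omega

lemma degIn_contract_src (T : DecTree) (e0 : T.E) (h : T.src e0 ≠ T.tgt e0) :
    (T.contract e0 h).degIn ⟨T.src e0, h⟩ + 1 = T.degIn (T.src e0) + T.degIn (T.tgt e0) := by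
  unfold degIn
  have hleg : (T.contract e0 h).legIn ⟨T.src e0, h⟩
      = T.legIn (T.src e0) + T.legIn (T.tgt e0) := by
    simp [contract]
  have e1 : Nat.card {e' : (T.contract e0 h).E // (T.contract e0 h).tgt e' = ⟨T.src e0, h⟩}
      = Nat.card {x : T.E // x ≠ e0 ∧ (T.tgt x = T.src e0 ∨ T.tgt x = T.tgt e0)} := by
    refine Nat.card_congr ((Equiv.subtypeEquivRight ?_).trans
      (Equiv.subtypeSubtypeEquivSubtypeInter (· ≠ e0)
        (fun x => T.tgt x = T.src e0 ∨ T.tgt x = T.tgt e0)))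
    intro e'
    refine (Subtype.ext_iff (a1 := (T.contract e0 h).tgt e') (a2 := ⟨T.src e0, h⟩)).trans ?_
    refine (iff_of_eq (congrArg (· = T.src e0) (contract_tgt_val T e0 h e'))).trans ?_
    by_cases hs : T.tgt e'.1 = T.tgt e0
    · rw [if_pos hs]
      exact iff_of_true rfl (Or.inr hs)
    · rw [if_neg hs]
      constructor
      · exact Or.inl
      · rintro (hh | hh)
        · exact hh
        · exact absurd hh hs
  have e2 := card_pair_aux T.tgt e0 (T.src e0) (T.tgt e0) h (Or.inr rfl)
  rw [hleg, e1]
  omega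

end DecTree

/-- After contracting a contractible edge `e0` of a semistable decorated
tree, an edge `e ≠ e0` is contractible in the contracted tree iff it is contractible
in the original tree. -/
theorem contractible_iff_of_contract (T : DecTree) (hT : T.IsTree) (hss : T.Semistable)
    (e0 : T.E) (hc : T.Contractible e0) (e : T.E) (he : e ≠ e0) :
    (T.contract e0 hc.1).Contractible ⟨e, he⟩ ↔ T.Contractible e := by
  simp only [DecTree.Contractible]
  constructor
  · rintro ⟨hne', hdeg'⟩
    have hne : T.src e ≠ T.tgt e := by
      intro heq
      apply hne'
      apply Subtype.ext
      rw [DecTree.contract_src_val, DecTree.contract_tgt_val, heq]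
    refine ⟨hne, ?_⟩
    rcases hdeg' with hout | hin
    · by_cases hsv : T.src e = T.tgt e0
      · have hsp : (T.contract e0 hc.1).src ⟨e, he⟩ = ⟨T.src e0, hc.1⟩ :=
          Subtype.ext (by rw [DecTree.contract_src_val, if_pos hsv])
        rw [hsp] at hout
        have hsum := T.degOut_contract_src e0 hc.1
        have h1 := (hss (T.src e0)).2.1
        have h2 := (hss (T.tgt e0)).2.1
        left
        rw [hsv]
        omega
      · by_cases hsu : T.src e = T.src e0
        · exfalso
          have hsp : (T.contract e0 hc.1).src ⟨e, he⟩ = ⟨T.src e0, hc.1⟩ :=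
            Subtype.ext (by rw [DecTree.contract_src_val, if_neg hsv, hsu])
          rw [hsp] at hout
          have hsum := T.degOut_contract_src e0 hc.1
          have h2le := two_le_card_aux T.src he hsu
          have h2 : 2 ≤ T.degOut (T.src e0) := by
            unfold DecTree.degOut
            omega
          have h3 := (hss (T.tgt e0)).2.1
          omega
        · have hsp : (T.contract e0 hc.1).src ⟨e, he⟩ = ⟨T.src e, hsv⟩ :=
            Subtype.ext (by rw [DecTree.contract_src_val, if_neg hsv])
          rw [hsp, T.degOut_contract_ne e0 hc.1 (T.src e) hsv hsu] at hout
          exact Or.inl hout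
    · by_cases htv : T.tgt e = T.tgt e0
      · exfalso
        have hsp : (T.contract e0 hc.1).tgt ⟨e, he⟩ = ⟨T.src e0, hc.1⟩ :=
          Subtype.ext (by rw [DecTree.contract_tgt_val, if_pos htv])
        rw [hsp] at hin
        have hsum := T.degIn_contract_src e0 hc.1
        have h2le := two_le_card_aux T.tgt he htv
        have h2 : 2 ≤ T.degIn (T.tgt e0) := by
          unfold DecTree.degIn
          omega
        have h1 := (hss (T.src e0)).1
        omega
      · by_cases htu : T.tgt e = T.src e0
        · have hsp : (T.contract e0 hc.1).tgt ⟨e, he⟩ = ⟨T.src e0, hc.1⟩ :=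
            Subtype.ext (by rw [DecTree.contract_tgt_val, if_neg htv, htu])
          rw [hsp] at hin
          have hsum := T.degIn_contract_src e0 hc.1
          have h1 := (hss (T.src e0)).1
          have h2 := (hss (T.tgt e0)).1
          right
          rw [htu]
          omega
        · have hsp : (T.contract e0 hc.1).tgt ⟨e, he⟩ = ⟨T.tgt e, htv⟩ :=
            Subtype.ext (by rw [DecTree.contract_tgt_val, if_neg htv])
          rw [hsp, T.degIn_contract_ne e0 hc.1 (T.tgt e) htv htu] at hin
          exact Or.inr hin
  · rintro ⟨hne, hdeg⟩
    have hnp : ¬((T.src e = T.src e0 ∧ T.tgt e = T.tgt e0) ∨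
        (T.src e = T.tgt e0 ∧ T.tgt e = T.src e0)) := fun hp => T.no_parallel hT e e0 he hp
    constructor
    · intro heq
      have hval := congrArg Subtype.val heq
      rw [DecTree.contract_src_val, DecTree.contract_tgt_val] at hval
      split_ifs at hval with h1 h2 h3
      · exact hne (h1.trans h2.symm)
      · exact hnp (Or.inr ⟨h1, hval.symm⟩)
      · exact hnp (Or.inl ⟨hval, h3⟩)
      · exact hne hval
    · rcases hdeg with hout | hin
      · by_cases hsu : T.src e = T.src e0
        · exfalso
          have h2le := two_le_card_aux T.src he hsu
          rw [hsu] at hout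
          unfold DecTree.degOut at hout
          omega
        · by_cases hsv : T.src e = T.tgt e0
          · left
            have hsp : (T.contract e0 hc.1).src ⟨e, he⟩ = ⟨T.src e0, hc.1⟩ :=
              Subtype.ext (by rw [DecTree.contract_src_val, if_pos hsv])
            rw [hsp]
            have hsum := T.degOut_contract_src e0 hc.1
            rw [hsv] at hout
            rcases hc.2 with h1 | h1
            · omega
            · have h3 := (hss (T.tgt e0)).2.2
              omega
          · left
            have hsp : (T.contract e0 hc.1).src ⟨e, he⟩ = ⟨T.src e, hsv⟩ :=
              Subtype.ext (by rw [DecTree.contract_src_val, if_neg hsv])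
            rw [hsp, T.degOut_contract_ne e0 hc.1 (T.src e) hsv hsu]
            exact hout
      · by_cases htv : T.tgt e = T.tgt e0
        · exfalso
          have h2le := two_le_card_aux T.tgt he htv
          rw [htv] at hin
          unfold DecTree.degIn at hin
          omega
        · by_cases htu : T.tgt e = T.src e0
          · right
            have hsp : (T.contract e0 hc.1).tgt ⟨e, he⟩ = ⟨T.src e0, hc.1⟩ :=
              Subtype.ext (by rw [DecTree.contract_tgt_val, if_neg htv, htu])
            rw [hsp]
            have hsum := T.degIn_contract_src e0 hc.1
            rw [htu] at hin
            rcases hc.2 with h1 | h1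
            · have h3 := (hss (T.src e0)).2.2
              omega
            · omega
          · right
            have hsp : (T.contract e0 hc.1).tgt ⟨e, he⟩ = ⟨T.tgt e, htv⟩ :=
              Subtype.ext (by rw [DecTree.contract_tgt_val, if_neg htv])
            rw [hsp, T.degIn_contract_ne e0 hc.1 (T.tgt e) htv htu]
            exact hin
end

section
/- Let G be a stabilizable semistable directed multigraph. If the stabilization graph of G is strongly connected, then G is strongly connected. -/
open Relation

structure MDigraph where
  V : Type
  E : Type
  [hV : Finite V]
  [hE : Finite E]
  src : E → V
  tgt : E → V

attribute [instance] MDigraph.hV MDigraph.hE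

namespace MDigraph

noncomputable def degOut (G : MDigraph) (v : G.V) : ℕ := Nat.card {e : G.E // G.src e = v}
noncomputable def degIn (G : MDigraph) (v : G.V) : ℕ := Nat.card {e : G.E // G.tgt e = v}

def Semistable (G : MDigraph) : Prop :=
  ∀ v : G.V, 1 ≤ G.degIn v ∧ 1 ≤ G.degOut v ∧ 3 ≤ G.degIn v + G.degOut v

def Stable (G : MDigraph) : Prop :=
  ∀ v : G.V, 2 ≤ G.degIn v ∧ 2 ≤ G.degOut v

def Contractible (G : MDigraph) (e : G.E) : Prop :=
  G.src e ≠ G.tgt e ∧ (G.degOut (G.src e) = 1 ∨ G.degIn (G.tgt e) = 1)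

def mergeRel (G : MDigraph) (e0 : G.E) (a b : G.V) : Prop :=
  a = b ∨ ((a = G.src e0 ∨ a = G.tgt e0) ∧ (b = G.src e0 ∨ b = G.tgt e0))

def contract (G : MDigraph) (e0 : G.E) : MDigraph where
  V := Quot (G.mergeRel e0)
  E := {e : G.E // e ≠ e0}
  src e := Quot.mk _ (G.src e.1)
  tgt e := Quot.mk _ (G.tgt e.1)

structure Iso (G H : MDigraph) where
  vEquiv : G.V ≃ H.V
  eEquiv : G.E ≃ H.E
  src_map : ∀ e, H.src (eEquiv e) = vEquiv (G.src e)
  tgt_map : ∀ e, H.tgt (eEquiv e) = vEquiv (G.tgt e)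

def Adj (G : MDigraph) (a b : G.V) : Prop := ∃ e, G.src e = a ∧ G.tgt e = b

def Strong (G : MDigraph) : Prop := ∀ a b : G.V, ReflTransGen G.Adj a b

def ContractStep (G H : MDigraph) : Prop :=
  ∃ e0 : G.E, G.Contractible e0 ∧ Nonempty (Iso (G.contract e0) H)

def IsStabilization (G H : MDigraph) : Prop :=
  ReflTransGen ContractStep G H ∧ H.Stable

def Stabilizable (G : MDigraph) : Prop := ∃ H, G.IsStabilization H

def IsLinear (G : MDigraph) (L : Set G.E) : Prop :=
  ∀ v : G.V, Nat.card {e : G.E // e ∈ L ∧ G.src e = v} = Nat.card {e : G.E // e ∈ L ∧ G.tgt e = v}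
    ∧ Nat.card {e : G.E // e ∈ L ∧ G.src e = v} ≤ 1

def LAdj (G : MDigraph) (L : Set G.E) (a b : G.V) : Prop := ∃ e ∈ L, G.src e = a ∧ G.tgt e = b

def supp (G : MDigraph) (L : Set G.E) : Set G.V := {v | ∃ e ∈ L, G.src e = v ∨ G.tgt e = v}

noncomputable def components (G : MDigraph) (L : Set G.E) : ℕ :=
  Nat.card (Quot (fun a b : G.supp L => G.LAdj L a.1 b.1))

noncomputable def adjMatrix (G : MDigraph) : Matrix G.V G.V ℤ :=
  Matrix.of fun a b => (Nat.card {e : G.E // G.src e = a ∧ G.tgt e = b} : ℤ)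

open Classical in
noncomputable def detIA (G : MDigraph) : ℤ :=
  letI := Fintype.ofFinite G.V
  ((1 : Matrix G.V G.V ℤ) - G.adjMatrix).det

noncomputable def weight (G : MDigraph) : ℤ := (Nat.card G.E : ℤ) - (Nat.card G.V : ℤ)

noncomputable def numLinear (G : MDigraph) : ℕ := Nat.card {L : Set G.E // G.IsLinear L}

end MDigraph

noncomputable example (G : MDigraph) (C : ℤ) : ℤ := ∑ᶠ L : {L : Set G.E // G.IsLinear L}, C ^ G.components L.1

namespace MDigraph

variable {G H : MDigraph}

lemma mergeRel_equivalence (G : MDigraph) (e0 : G.E) : Equivalence (G.mergeRel e0) := by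
  constructor
  · intro a; exact Or.inl rfl
  · rintro a b (rfl | ⟨h1, h2⟩)
    · exact Or.inl rfl
    · exact Or.inr ⟨h2, h1⟩
  · rintro a b c (rfl | ⟨h1, h2⟩) h
    · exact h
    · rcases h with rfl | ⟨h3, h4⟩
      · exact Or.inr ⟨h1, h2⟩
      · exact Or.inr ⟨h1, h4⟩

lemma mk_eq_mk {e0 : G.E} {a b : G.V} :
    Quot.mk (G.mergeRel e0) a = Quot.mk (G.mergeRel e0) b ↔ G.mergeRel e0 a b := by
  rw [Quot.eq, (G.mergeRel_equivalence e0).eqvGen_iff]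

lemma degIn_le_contract {e0 : G.E} {v : G.V} (h : v ≠ G.tgt e0) :
    G.degIn v ≤ (G.contract e0).degIn (Quot.mk _ v) := by
  refine Nat.card_le_card_of_injective
    (fun e => ⟨⟨e.1, fun he => h (e.2 ▸ he ▸ rfl)⟩, ?_⟩) ?_
  · show Quot.mk _ (G.tgt e.1) = Quot.mk _ v
    rw [e.2]
  · intro a b hab
    apply Subtype.ext
    exact congrArg (fun x => x.1.1) hab

lemma degOut_le_contract {e0 : G.E} {v : G.V} (h : v ≠ G.src e0) :
    G.degOut v ≤ (G.contract e0).degOut (Quot.mk _ v) := by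
  refine Nat.card_le_card_of_injective
    (fun e => ⟨⟨e.1, fun he => h (e.2 ▸ he ▸ rfl)⟩, ?_⟩) ?_
  · show Quot.mk _ (G.src e.1) = Quot.mk _ v
    rw [e.2]
  · intro a b hab
    apply Subtype.ext
    exact congrArg (fun x => x.1.1) hab

lemma semistable_contract {e0 : G.E} (hG : G.Semistable) (hc : G.Contractible e0) :
    (G.contract e0).Semistable := by
  intro q
  induction q using Quot.ind with
  | _ v =>
  obtain ⟨hne, hcase⟩ := hc
  by_cases hv : v = G.src e0 ∨ v = G.tgt e0
  · have hq : Quot.mk (G.mergeRel e0) v = Quot.mk (G.mergeRel e0) (G.src e0) :=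
      mk_eq_mk.mpr (Or.inr ⟨hv, Or.inl rfl⟩)
    have hq' : Quot.mk (G.mergeRel e0) v = Quot.mk (G.mergeRel e0) (G.tgt e0) :=
      mk_eq_mk.mpr (Or.inr ⟨hv, Or.inr rfl⟩)
    have hIn : G.degIn (G.src e0) ≤ (G.contract e0).degIn (Quot.mk _ v) := by
      rw [hq]; exact degIn_le_contract hne
    have hOut : G.degOut (G.tgt e0) ≤ (G.contract e0).degOut (Quot.mk _ v) := by
      rw [hq']; exact degOut_le_contract (Ne.symm hne)
    rcases hcase with h1 | h1
    · have hs := hG (G.src e0)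
      have ht := hG (G.tgt e0)
      have h2 : 2 ≤ G.degIn (G.src e0) := by omega
      have h3 : 1 ≤ G.degOut (G.tgt e0) := ht.2.1
      exact ⟨by omega, by omega, by omega⟩
    · have hs := hG (G.src e0)
      have ht := hG (G.tgt e0)
      have h2 : 2 ≤ G.degOut (G.tgt e0) := by omega
      have h3 : 1 ≤ G.degIn (G.src e0) := hs.1
      exact ⟨by omega, by omega, by omega⟩
  · push_neg at hv
    have hIn : G.degIn v ≤ (G.contract e0).degIn (Quot.mk _ v) := degIn_le_contract hv.2
    have hOut : G.degOut v ≤ (G.contract e0).degOut (Quot.mk _ v) := degOut_le_contract hv.1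
    have := hG v
    exact ⟨by omega, by omega, by omega⟩

def Iso.symm (i : Iso G H) : Iso H G where
  vEquiv := i.vEquiv.symm
  eEquiv := i.eEquiv.symm
  src_map e := by
    apply i.vEquiv.injective
    rw [Equiv.apply_symm_apply, ← i.src_map, Equiv.apply_symm_apply]
  tgt_map e := by
    apply i.vEquiv.injective
    rw [Equiv.apply_symm_apply, ← i.tgt_map, Equiv.apply_symm_apply]

lemma Iso.adj (i : Iso G H) {a b : G.V} (h : G.Adj a b) :
    H.Adj (i.vEquiv a) (i.vEquiv b) := by
  obtain ⟨e, h1, h2⟩ := h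
  exact ⟨i.eEquiv e, by rw [i.src_map, h1], by rw [i.tgt_map, h2]⟩

lemma Iso.strong (i : Iso G H) (h : G.Strong) : H.Strong := by
  intro a b
  have := Relation.ReflTransGen.lift i.vEquiv (fun x y hxy => i.adj hxy) _ _
    (h (i.vEquiv.symm a) (i.vEquiv.symm b))
  simpa [Function.onFun] using this

lemma Iso.degIn_eq (i : Iso G H) (v : G.V) : H.degIn (i.vEquiv v) = G.degIn v := by
  refine (Nat.card_congr (Equiv.subtypeEquiv i.eEquiv fun e => ?_)).symm
  rw [i.tgt_map]
  exact ⟨fun h => by rw [h], fun h => i.vEquiv.injective h⟩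

lemma Iso.degOut_eq (i : Iso G H) (v : G.V) : H.degOut (i.vEquiv v) = G.degOut v := by
  refine (Nat.card_congr (Equiv.subtypeEquiv i.eEquiv fun e => ?_)).symm
  rw [i.src_map]
  exact ⟨fun h => by rw [h], fun h => i.vEquiv.injective h⟩

lemma Iso.semistable (i : Iso G H) (h : G.Semistable) : H.Semistable := by
  intro v
  have hv : v = i.vEquiv (i.vEquiv.symm v) := (Equiv.apply_symm_apply _ _).symm
  rw [hv, i.degIn_eq, i.degOut_eq]
  exact h _

lemma strong_of_contract {e0 : G.E} (hG : G.Semistable) (hc : G.Contractible e0)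
    (hC : (G.contract e0).Strong) : G.Strong := by
  obtain ⟨hne, hcase⟩ := hc
  have hst : Relation.ReflTransGen G.Adj (G.src e0) (G.tgt e0) :=
    Relation.ReflTransGen.single ⟨e0, rfl, rfl⟩
  rcases hcase with hOut | hIn
  · -- degOut (src e0) = 1
    have huniq : ∀ e, G.src e = G.src e0 → e = e0 := by
      intro e he
      have hs : Subsingleton {e : G.E // G.src e = G.src e0} :=
        (Nat.card_eq_one_iff_unique.mp hOut).1
      exact congrArg Subtype.val (hs.elim ⟨e, he⟩ ⟨e0, rfl⟩)
    have lift : ∀ (q : (G.contract e0).V) (b : G.V), b ≠ G.src e0 →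
        Relation.ReflTransGen (G.contract e0).Adj q (Quot.mk _ b) →
        ∃ a, Relation.ReflTransGen G.Adj a b ∧ Quot.mk (G.mergeRel e0) a = q ∧
          a ≠ G.src e0 := by
      intro q b hb h
      induction h using Relation.ReflTransGen.head_induction_on with
      | refl => exact ⟨b, .refl, rfl, hb⟩
      | head h1 h2 ih =>
        obtain ⟨a, hR, haq, has⟩ := ih
        obtain ⟨e, hes, het⟩ := h1
        have hm : G.mergeRel e0 (G.tgt e.1) a := mk_eq_mk.mp (het.trans haq.symm)
        have hta : Relation.ReflTransGen G.Adj (G.tgt e.1) a := by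
          rcases hm with heq | ⟨h3, h4⟩
          · rw [heq]
          · have hat : a = G.tgt e0 := h4.resolve_left has
            rcases h3 with h3 | h3
            · rw [h3, hat]; exact hst
            · rw [h3, hat]
        refine ⟨G.src e.1, Relation.ReflTransGen.trans
          (Relation.ReflTransGen.single ⟨e.1, rfl, rfl⟩) (hta.trans hR), hes, ?_⟩
        intro hS
        exact e.2 (huniq e.1 hS)
    -- t ⇝ s
    have hdin : 0 < Nat.card {e : G.E // G.tgt e = G.src e0} := (hG (G.src e0)).1
    obtain ⟨⟨f, hf⟩⟩ := (Nat.card_pos_iff.mp hdin).1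
    have hfs : G.src f ≠ G.src e0 := by
      intro h
      exact hne ((huniq f h ▸ hf).symm)
    have hts : Relation.ReflTransGen G.Adj (G.tgt e0) (G.src e0) := by
      by_cases hx : G.src f = G.tgt e0
      · exact Relation.ReflTransGen.single ⟨f, hx, hf⟩
      · obtain ⟨a, hR, haq, has⟩ := lift _ _ hfs
          (hC (Quot.mk _ (G.tgt e0)) (Quot.mk _ (G.src f)))
        have hm : G.mergeRel e0 a (G.tgt e0) := mk_eq_mk.mp haq
        have hat : a = G.tgt e0 := by
          rcases hm with h | ⟨h1, _⟩
          · exact h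
          · exact h1.resolve_left has
        rw [← hat]
        exact hR.tail ⟨f, rfl, hf⟩
    have conn : ∀ a b : G.V, b ≠ G.src e0 → Relation.ReflTransGen G.Adj a b := by
      intro a b hb
      obtain ⟨a', hR, haq, has⟩ := lift _ _ hb (hC (Quot.mk _ a) (Quot.mk _ b))
      rcases mk_eq_mk.mp haq with heq | ⟨h1, h2⟩
      · rw [← heq]; exact hR
      · have ha't : a' = G.tgt e0 := h1.resolve_left has
        rcases h2 with h2 | h2
        · rw [h2]; exact hst.trans (ha't ▸ hR)
        · rw [h2, ← ha't]; exact hR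
    intro a b
    by_cases hb : b = G.src e0
    · subst hb
      exact (conn a (G.tgt e0) (Ne.symm hne)).trans hts
    · exact conn a b hb
  · -- degIn (tgt e0) = 1
    have huniq : ∀ e, G.tgt e = G.tgt e0 → e = e0 := by
      intro e he
      have hs : Subsingleton {e : G.E // G.tgt e = G.tgt e0} :=
        (Nat.card_eq_one_iff_unique.mp hIn).1
      exact congrArg Subtype.val (hs.elim ⟨e, he⟩ ⟨e0, rfl⟩)
    have lift : ∀ (q : (G.contract e0).V) (a : G.V), a ≠ G.tgt e0 →
        Relation.ReflTransGen (G.contract e0).Adj (Quot.mk _ a) q →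
        ∃ b, Relation.ReflTransGen G.Adj a b ∧ Quot.mk (G.mergeRel e0) b = q ∧
          b ≠ G.tgt e0 := by
      intro q a ha h
      induction h with
      | refl => exact ⟨a, .refl, rfl, ha⟩
      | tail h1 h2 ih =>
        obtain ⟨b, hR, hbq, hbt⟩ := ih
        obtain ⟨e, hes, het⟩ := h2
        have hm : G.mergeRel e0 b (G.src e.1) := mk_eq_mk.mp (hbq.trans hes.symm)
        have hbs : Relation.ReflTransGen G.Adj b (G.src e.1) := by
          rcases hm with heq | ⟨h3, h4⟩
          · rw [heq]
          · have hbS : b = G.src e0 := h3.resolve_right hbt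
            rcases h4 with h4 | h4
            · rw [hbS, h4]
            · rw [hbS, h4]; exact hst
        refine ⟨G.tgt e.1, (hR.trans hbs).tail ⟨e.1, rfl, rfl⟩, het, ?_⟩
        intro hT
        exact e.2 (huniq e.1 hT)
    have hdout : 0 < Nat.card {e : G.E // G.src e = G.tgt e0} := (hG (G.tgt e0)).2.1
    obtain ⟨⟨g, hg⟩⟩ := (Nat.card_pos_iff.mp hdout).1
    have hgt : G.tgt g ≠ G.tgt e0 := by
      intro h
      exact hne (huniq g h ▸ hg)
    have hts : Relation.ReflTransGen G.Adj (G.tgt e0) (G.src e0) := by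
      by_cases hy : G.tgt g = G.src e0
      · exact Relation.ReflTransGen.single ⟨g, hg, hy⟩
      · obtain ⟨b, hR, hbq, hbt⟩ := lift _ _ hgt
          (hC (Quot.mk _ (G.tgt g)) (Quot.mk _ (G.src e0)))
        have hm : G.mergeRel e0 b (G.src e0) := mk_eq_mk.mp hbq
        have hbs : b = G.src e0 := by
          rcases hm with h | ⟨h1, _⟩
          · exact h
          · exact h1.resolve_right hbt
        exact (Relation.ReflTransGen.single ⟨g, hg, rfl⟩).trans (hbs ▸ hR)
    have conn : ∀ a b : G.V, a ≠ G.tgt e0 → Relation.ReflTransGen G.Adj a b := by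
      intro a b ha
      obtain ⟨b', hR, hbq, hbt⟩ := lift _ _ ha (hC (Quot.mk _ a) (Quot.mk _ b))
      rcases mk_eq_mk.mp hbq with heq | ⟨h1, h2⟩
      · rw [heq] at hR; exact hR
      · have hb's : b' = G.src e0 := h1.resolve_right hbt
        rcases h2 with h2 | h2
        · rw [h2, ← hb's]; exact hR
        · rw [h2]; exact (hb's ▸ hR).trans hst
    intro a b
    by_cases ha : a = G.tgt e0
    · subst ha
      exact hts.trans (conn (G.src e0) b hne)
    · exact conn a b ha

end MDigraph

/-- A stabilizable semistable graph whose stabilization graph is strongly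
connected is itself strongly connected. -/
theorem strong_of_strong_stabilization (G H : MDigraph) (hG : G.Semistable)
    (hst : G.IsStabilization H) (hH : H.Strong) : G.Strong := by
  obtain ⟨hchain, _⟩ := hst
  induction hchain using Relation.ReflTransGen.head_induction_on with
  | refl => exact hH
  | head hGG' hchain ih =>
    obtain ⟨e0, hc, ⟨iso⟩⟩ := hGG'
    have hsemi' := iso.semistable (MDigraph.semistable_contract hG hc)
    have hstrong' := ih hsemi'
    exact MDigraph.strong_of_contract hG hc (iso.symm.strong hstrong')
end

section
/- For any constant C, the function β_C(H) = Σ_{L ∈ 𝓛(H)} C^{p(L)}, where 𝓛(H) is the set of linear subgraphs of H (including the empty one) and p(L) the number of components of L, is invariant under contraction of contractible edges: if H' is obtained from a semistable graph H by contracting a contractible edge, then β_C(H) = β_C(H'). -/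
open Relation

noncomputable example (G : MDigraph) (C : ℤ) : ℤ := ∑ᶠ L : {L : Set G.E // G.IsLinear L}, C ^ G.components L.1


/-! ### Auxiliary counting gadgets -/

section Gadgets
variable {α : Type*}

lemma card_pred_congr {P Q : α → Prop} (h : ∀ x, P x ↔ Q x) :
    Nat.card {x // P x} = Nat.card {x // Q x} :=
  Nat.card_congr (Equiv.subtypeEquivRight h)

open Classical in
lemma card_or [Finite α] {P Q : α → Prop} (h : ∀ x, ¬(P x ∧ Q x)) :
    Nat.card {x // P x ∨ Q x} = Nat.card {x // P x} + Nat.card {x // Q x} := by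
  rw [← Nat.card_sum]
  refine Nat.card_congr (subtypeOrEquiv P Q ?_)
  rw [disjoint_iff, eq_bot_iff]
  intro x hx
  exact absurd hx (by simpa using h x)

lemma card_erase [Finite α] {P : α → Prop} {x0 : α} (h : P x0) :
    Nat.card {x // P x} = Nat.card {x // P x ∧ x ≠ x0} + 1 := by
  have h1 : ∀ x, P x ↔ ((P x ∧ x ≠ x0) ∨ x = x0) := by
    intro x
    constructor
    · intro hp
      by_cases hx : x = x0
      · exact Or.inr hx
      · exact Or.inl ⟨hp, hx⟩
    · rintro (⟨hp, _⟩ | rfl) <;> [exact hp; exact h]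
  rw [card_pred_congr h1, card_or (fun x hx => hx.1.2 hx.2)]
  congr 1
  have : Nonempty {x // x = x0} := ⟨⟨x0, rfl⟩⟩
  have : Subsingleton {x // x = x0} := ⟨fun a b => Subtype.ext (a.2.trans b.2.symm)⟩
  exact Nat.card_unique

lemma card_no_erase {P : α → Prop} {x0 : α} (h : ¬ P x0) :
    Nat.card {x // P x ∧ x ≠ x0} = Nat.card {x // P x} :=
  card_pred_congr fun x => ⟨fun hx => hx.1, fun hx => ⟨hx, fun e => h (e ▸ hx)⟩⟩

lemma eq_of_card_le_one [Finite α] (h : Nat.card α ≤ 1) (a b : α) : a = b := by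
  have := Finite.card_le_one_iff_subsingleton.mp h
  exact Subsingleton.elim a b

lemma nonempty_of_one_le_card {h : 1 ≤ Nat.card α} : Nonempty α :=
  (Nat.card_pos_iff.mp h).1

lemma one_le_card_of_nonempty [Finite α] (h : Nonempty α) : 1 ≤ Nat.card α :=
  Nat.card_pos_iff.mpr ⟨h, ‹_›⟩

lemma card_eq_zero_of_empty (h : ¬ Nonempty α) : Nat.card α = 0 := by
  have : IsEmpty α := not_nonempty_iff.mp h
  exact Nat.card_of_isEmpty

end Gadgets

namespace MDigraph

section Beta

variable {H : MDigraph} {e0 : H.E}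

lemma merge_equivalence (H : MDigraph) (e0 : H.E) : Equivalence (H.mergeRel e0) := by
  constructor
  · intro a; exact Or.inl rfl
  · rintro a b (rfl | ⟨h1, h2⟩)
    · exact Or.inl rfl
    · exact Or.inr ⟨h2, h1⟩
  · rintro a b c (rfl | ⟨h1, h2⟩) (rfl | ⟨h3, h4⟩)
    · exact Or.inl rfl
    · exact Or.inr ⟨h3, h4⟩
    · exact Or.inr ⟨h1, h2⟩
    · exact Or.inr ⟨h1, h4⟩

lemma mk_merge_eq {a b : H.V} :
    (Quot.mk (H.mergeRel e0) a = Quot.mk (H.mergeRel e0) b) ↔ H.mergeRel e0 a b := by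
  rw [Quot.eq]
  exact (merge_equivalence H e0).eqvGen_iff

lemma merge_off {x v : H.V} (hv : v ≠ H.src e0) (hv' : v ≠ H.tgt e0) :
    H.mergeRel e0 x v ↔ x = v := by
  constructor
  · rintro (rfl | ⟨_, (rfl | rfl)⟩)
    · rfl
    · exact absurd rfl hv
    · exact absurd rfl hv'
  · exact fun h => Or.inl h

lemma merge_s {x : H.V} :
    H.mergeRel e0 x (H.src e0) ↔ (x = H.src e0 ∨ x = H.tgt e0) := by
  constructor
  · rintro (rfl | ⟨h1, _⟩)
    · exact Or.inl rfl
    · exact h1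
  · exact fun h => Or.inr ⟨h, Or.inl rfl⟩

lemma quot_t_eq_s : Quot.mk (H.mergeRel e0) (H.tgt e0) = Quot.mk (H.mergeRel e0) (H.src e0) :=
  Quot.sound (Or.inr ⟨Or.inr rfl, Or.inl rfl⟩)

lemma contract_src (e : (H.contract e0).E) :
    (H.contract e0).src e = Quot.mk (H.mergeRel e0) (H.src e.1) := rfl

lemma contract_tgt (e : (H.contract e0).E) :
    (H.contract e0).tgt e = Quot.mk (H.mergeRel e0) (H.tgt e.1) := rfl

/-- Number of edges of `L` with source `v`. -/
noncomputable def cO (G : MDigraph) (L : Set G.E) (v : G.V) : ℕ :=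
  Nat.card {e : G.E // e ∈ L ∧ G.src e = v}

/-- Number of edges of `L` with target `v`. -/
noncomputable def cI (G : MDigraph) (L : Set G.E) (v : G.V) : ℕ :=
  Nat.card {e : G.E // e ∈ L ∧ G.tgt e = v}

lemma isLinear_iff {G : MDigraph} {L : Set G.E} :
    G.IsLinear L ↔ ∀ v, cO G L v = cI G L v ∧ cO G L v ≤ 1 := Iff.rfl

/-- The image of an edge set under contraction. -/
def phiSet (H : MDigraph) (e0 : H.E) (L : Set H.E) : Set (H.contract e0).E := {e | e.1 ∈ L}

lemma mem_phiSet {L : Set H.E} {e : (H.contract e0).E} : e ∈ phiSet H e0 L ↔ e.1 ∈ L := Iff.rfl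

lemma cO_contract_off (L : Set H.E) {v : H.V} (hv : v ≠ H.src e0) (hv' : v ≠ H.tgt e0) :
    cO (H.contract e0) (phiSet H e0 L) (Quot.mk (H.mergeRel e0) v) = cO H L v := by
  refine (Nat.card_congr (Equiv.subtypeSubtypeEquivSubtypeInter (fun e => e ≠ e0)
    (fun e => e ∈ L ∧ Quot.mk (H.mergeRel e0) (H.src e) = Quot.mk (H.mergeRel e0) v))).trans
    (card_pred_congr fun e => ?_)
  constructor
  · rintro ⟨-, heL, hq⟩
    exact ⟨heL, (merge_off hv hv').mp (mk_merge_eq.mp hq)⟩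
  · rintro ⟨heL, hsv⟩
    exact ⟨fun h => hv (hsv ▸ congrArg H.src h), heL, by rw [hsv]⟩

lemma cI_contract_off (L : Set H.E) {v : H.V} (hv : v ≠ H.src e0) (hv' : v ≠ H.tgt e0) :
    cI (H.contract e0) (phiSet H e0 L) (Quot.mk (H.mergeRel e0) v) = cI H L v := by
  refine (Nat.card_congr (Equiv.subtypeSubtypeEquivSubtypeInter (fun e => e ≠ e0)
    (fun e => e ∈ L ∧ Quot.mk (H.mergeRel e0) (H.tgt e) = Quot.mk (H.mergeRel e0) v))).trans
    (card_pred_congr fun e => ?_)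
  constructor
  · rintro ⟨-, heL, hq⟩
    exact ⟨heL, (merge_off hv hv').mp (mk_merge_eq.mp hq)⟩
  · rintro ⟨heL, hsv⟩
    exact ⟨fun h => hv' (hsv ▸ congrArg H.tgt h), heL, by rw [hsv]⟩

lemma cO_contract_merge (hst : H.src e0 ≠ H.tgt e0) (L : Set H.E) :
    cO (H.contract e0) (phiSet H e0 L) (Quot.mk (H.mergeRel e0) (H.src e0)) =
      Nat.card {e : H.E // (e ∈ L ∧ H.src e = H.src e0) ∧ e ≠ e0} + cO H L (H.tgt e0) := by
  have step1 : cO (H.contract e0) (phiSet H e0 L) (Quot.mk (H.mergeRel e0) (H.src e0)) =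
      Nat.card {e : H.E // ((e ∈ L ∧ H.src e = H.src e0) ∧ e ≠ e0) ∨
        ((e ∈ L ∧ H.src e = H.tgt e0) ∧ e ≠ e0)} := by
    refine (Nat.card_congr (Equiv.subtypeSubtypeEquivSubtypeInter (fun e => e ≠ e0)
      (fun e => e ∈ L ∧ Quot.mk (H.mergeRel e0) (H.src e) =
        Quot.mk (H.mergeRel e0) (H.src e0)))).trans (card_pred_congr fun e => ?_)
    constructor
    · rintro ⟨hne, heL, hq⟩
      rcases merge_s.mp (mk_merge_eq.mp hq) with h | h
      · exact Or.inl ⟨⟨heL, h⟩, hne⟩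
      · exact Or.inr ⟨⟨heL, h⟩, hne⟩
    · rintro (⟨⟨heL, h⟩, hne⟩ | ⟨⟨heL, h⟩, hne⟩)
      · exact ⟨hne, heL, mk_merge_eq.mpr (merge_s.mpr (Or.inl h))⟩
      · exact ⟨hne, heL, mk_merge_eq.mpr (merge_s.mpr (Or.inr h))⟩
  rw [step1, card_or (fun e he => hst (he.1.1.2.symm.trans he.2.1.2))]
  congr 1
  exact card_no_erase (fun h => hst h.2)

lemma cI_contract_merge (hst : H.src e0 ≠ H.tgt e0) (L : Set H.E) :
    cI (H.contract e0) (phiSet H e0 L) (Quot.mk (H.mergeRel e0) (H.src e0)) =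
      cI H L (H.src e0) + Nat.card {e : H.E // (e ∈ L ∧ H.tgt e = H.tgt e0) ∧ e ≠ e0} := by
  have step1 : cI (H.contract e0) (phiSet H e0 L) (Quot.mk (H.mergeRel e0) (H.src e0)) =
      Nat.card {e : H.E // ((e ∈ L ∧ H.tgt e = H.src e0) ∧ e ≠ e0) ∨
        ((e ∈ L ∧ H.tgt e = H.tgt e0) ∧ e ≠ e0)} := by
    refine (Nat.card_congr (Equiv.subtypeSubtypeEquivSubtypeInter (fun e => e ≠ e0)
      (fun e => e ∈ L ∧ Quot.mk (H.mergeRel e0) (H.tgt e) =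
        Quot.mk (H.mergeRel e0) (H.src e0)))).trans (card_pred_congr fun e => ?_)
    constructor
    · rintro ⟨hne, heL, hq⟩
      rcases merge_s.mp (mk_merge_eq.mp hq) with h | h
      · exact Or.inl ⟨⟨heL, h⟩, hne⟩
      · exact Or.inr ⟨⟨heL, h⟩, hne⟩
    · rintro (⟨⟨heL, h⟩, hne⟩ | ⟨⟨heL, h⟩, hne⟩)
      · exact ⟨hne, heL, mk_merge_eq.mpr (merge_s.mpr (Or.inl h))⟩
      · exact ⟨hne, heL, mk_merge_eq.mpr (merge_s.mpr (Or.inr h))⟩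
  rw [step1, card_or (fun e he => hst (he.1.1.2.symm.trans he.2.1.2))]
  congr 1
  exact card_no_erase (fun h => hst h.2.symm)

lemma src_eq_e0 (hd : H.degOut (H.src e0) = 1) {e : H.E} (he : H.src e = H.src e0) : e = e0 :=
  congrArg Subtype.val
    (eq_of_card_le_one (le_of_eq hd) (⟨e, he⟩ : {e : H.E // H.src e = H.src e0}) ⟨e0, rfl⟩)

lemma tgt_eq_e0 (hd : H.degIn (H.tgt e0) = 1) {e : H.E} (he : H.tgt e = H.tgt e0) : e = e0 :=
  congrArg Subtype.val
    (eq_of_card_le_one (le_of_eq hd) (⟨e, he⟩ : {e : H.E // H.tgt e = H.tgt e0}) ⟨e0, rfl⟩)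

lemma isLinear_phi (hst : H.src e0 ≠ H.tgt e0)
    (hcc : H.degOut (H.src e0) = 1 ∨ H.degIn (H.tgt e0) = 1)
    {L : Set H.E} (hL : H.IsLinear L) : (H.contract e0).IsLinear (phiSet H e0 L) := by
  rw [isLinear_iff]
  have hs := (isLinear_iff.mp hL) (H.src e0)
  have ht := (isLinear_iff.mp hL) (H.tgt e0)
  have key : cO (H.contract e0) (phiSet H e0 L) (Quot.mk (H.mergeRel e0) (H.src e0)) =
      cI (H.contract e0) (phiSet H e0 L) (Quot.mk (H.mergeRel e0) (H.src e0)) ∧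
      cO (H.contract e0) (phiSet H e0 L) (Quot.mk (H.mergeRel e0) (H.src e0)) ≤ 1 := by
    rw [cO_contract_merge hst, cI_contract_merge hst]
    by_cases he0 : e0 ∈ L
    · have h1 : cO H L (H.src e0) =
        Nat.card {e : H.E // (e ∈ L ∧ H.src e = H.src e0) ∧ e ≠ e0} + 1 := card_erase ⟨he0, rfl⟩
      have h2 : cI H L (H.tgt e0) =
        Nat.card {e : H.E // (e ∈ L ∧ H.tgt e = H.tgt e0) ∧ e ≠ e0} + 1 := card_erase ⟨he0, rfl⟩
      have h3 : 1 ≤ cO H L (H.src e0) := one_le_card_of_nonempty ⟨⟨e0, he0, rfl⟩⟩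
      have h4 : 1 ≤ cI H L (H.tgt e0) := one_le_card_of_nonempty ⟨⟨e0, he0, rfl⟩⟩
      omega
    · have h1 : Nat.card {e : H.E // (e ∈ L ∧ H.src e = H.src e0) ∧ e ≠ e0} =
        cO H L (H.src e0) := card_no_erase (fun h => he0 h.1)
      have h2 : Nat.card {e : H.E // (e ∈ L ∧ H.tgt e = H.tgt e0) ∧ e ≠ e0} =
        cI H L (H.tgt e0) := card_no_erase (fun h => he0 h.1)
      rcases hcc with hd | hd
      · have h5 : cO H L (H.src e0) = 0 := card_eq_zero_of_empty
          (fun ⟨⟨e, heL, hse⟩⟩ => he0 ((src_eq_e0 hd hse) ▸ heL))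
        omega
      · have h5 : cI H L (H.tgt e0) = 0 := card_eq_zero_of_empty
          (fun ⟨⟨e, heL, hse⟩⟩ => he0 ((tgt_eq_e0 hd hse) ▸ heL))
        omega
  intro q
  obtain ⟨v, rfl⟩ := Quot.exists_rep q
  by_cases hvs : v = H.src e0
  · subst hvs; exact key
  by_cases hvt : v = H.tgt e0
  · subst hvt; rw [show (Quot.mk (H.mergeRel e0) (H.tgt e0)) = _ from quot_t_eq_s]; exact key
  · rw [cO_contract_off L hvs hvt, cI_contract_off L hvs hvt]
    exact hL v

lemma exists_src_of_pos {L : Set H.E} {v : H.V} (h : 1 ≤ cO H L v) :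
    ∃ e, e ∈ L ∧ H.src e = v := by
  obtain ⟨⟨e, he⟩⟩ := (Nat.card_pos_iff.mp h).1
  exact ⟨e, he⟩

lemma exists_tgt_of_pos {L : Set H.E} {v : H.V} (h : 1 ≤ cI H L v) :
    ∃ e, e ∈ L ∧ H.tgt e = v := by
  obtain ⟨⟨e, he⟩⟩ := (Nat.card_pos_iff.mp h).1
  exact ⟨e, he⟩

lemma cO_pos_of_mem {L : Set H.E} {v : H.V} {e : H.E} (he : e ∈ L) (hs : H.src e = v) :
    1 ≤ cO H L v := one_le_card_of_nonempty ⟨⟨e, he, hs⟩⟩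

lemma cI_pos_of_mem {L : Set H.E} {v : H.V} {e : H.E} (he : e ∈ L) (hs : H.tgt e = v) :
    1 ≤ cI H L v := one_le_card_of_nonempty ⟨⟨e, he, hs⟩⟩

lemma phi_mem_aux (hst : H.src e0 ≠ H.tgt e0) {L L' : Set H.E}
    (hL : H.IsLinear L) (hL' : H.IsLinear L')
    (hmem : ∀ e : H.E, e ≠ e0 → (e ∈ L ↔ e ∈ L')) (he0 : e0 ∈ L) : e0 ∈ L' := by
  have h3 : 1 ≤ cI H L (H.src e0) := by
    rw [← (isLinear_iff.mp hL (H.src e0)).1]; exact cO_pos_of_mem he0 rfl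
  obtain ⟨f, hfL, hfs⟩ := exists_tgt_of_pos h3
  have hfne : f ≠ e0 := by intro h; subst h; exact hst hfs.symm
  have h4 : 1 ≤ cO H L' (H.src e0) := by
    rw [(isLinear_iff.mp hL' (H.src e0)).1]; exact cI_pos_of_mem ((hmem f hfne).mp hfL) hfs
  obtain ⟨g, hgL', hgs⟩ := exists_src_of_pos h4
  by_cases hg : g = e0
  · exact hg ▸ hgL'
  · have hgL : g ∈ L := (hmem g hg).mpr hgL'
    have heq : (⟨g, hgL, hgs⟩ : {e : H.E // e ∈ L ∧ H.src e = H.src e0}) = ⟨e0, he0, rfl⟩ :=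
      eq_of_card_le_one (hL (H.src e0)).2 _ _
    exact absurd (congrArg Subtype.val heq) hg

lemma phi_injective (hst : H.src e0 ≠ H.tgt e0) {L L' : Set H.E}
    (hL : H.IsLinear L) (hL' : H.IsLinear L')
    (h : phiSet H e0 L = phiSet H e0 L') : L = L' := by
  have hmem : ∀ e : H.E, e ≠ e0 → (e ∈ L ↔ e ∈ L') := by
    intro e he
    exact Set.ext_iff.mp h ⟨e, he⟩
  ext e
  by_cases he : e = e0
  · subst he
    exact ⟨fun h' => phi_mem_aux hst hL hL' hmem h',
      fun h' => phi_mem_aux hst hL' hL (fun e he => (hmem e he).symm) h'⟩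
  · exact hmem e he

lemma cO_insert_self {L0 : Set H.E} (h : e0 ∉ L0) :
    cO H (insert e0 L0) (H.src e0) = cO H L0 (H.src e0) + 1 := by
  have h1 : cO H (insert e0 L0) (H.src e0)
      = Nat.card {e : H.E // (e ∈ insert e0 L0 ∧ H.src e = H.src e0) ∧ e ≠ e0} + 1 :=
    card_erase ⟨Set.mem_insert _ _, rfl⟩
  rw [h1]
  congr 1
  refine card_pred_congr fun e => ?_
  simp only [Set.mem_insert_iff]
  constructor
  · rintro ⟨⟨(rfl | hm), hs⟩, hne⟩
    · exact absurd rfl hne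
    · exact ⟨hm, hs⟩
  · rintro ⟨hm, hs⟩
    exact ⟨⟨Or.inr hm, hs⟩, fun hh => h (hh ▸ hm)⟩

lemma cI_insert_self {L0 : Set H.E} (h : e0 ∉ L0) :
    cI H (insert e0 L0) (H.tgt e0) = cI H L0 (H.tgt e0) + 1 := by
  have h1 : cI H (insert e0 L0) (H.tgt e0)
      = Nat.card {e : H.E // (e ∈ insert e0 L0 ∧ H.tgt e = H.tgt e0) ∧ e ≠ e0} + 1 :=
    card_erase ⟨Set.mem_insert _ _, rfl⟩
  rw [h1]
  congr 1
  refine card_pred_congr fun e => ?_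
  simp only [Set.mem_insert_iff]
  constructor
  · rintro ⟨⟨(rfl | hm), hs⟩, hne⟩
    · exact absurd rfl hne
    · exact ⟨hm, hs⟩
  · rintro ⟨hm, hs⟩
    exact ⟨⟨Or.inr hm, hs⟩, fun hh => h (hh ▸ hm)⟩

lemma cO_insert_off {L0 : Set H.E} {v : H.V} (hv : v ≠ H.src e0) :
    cO H (insert e0 L0) v = cO H L0 v := by
  refine card_pred_congr fun e => ?_
  simp only [Set.mem_insert_iff]
  constructor
  · rintro ⟨(rfl | hm), hs⟩
    · exact absurd hs.symm hv
    · exact ⟨hm, hs⟩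
  · rintro ⟨hm, hs⟩
    exact ⟨Or.inr hm, hs⟩

lemma cI_insert_off {L0 : Set H.E} {v : H.V} (hv : v ≠ H.tgt e0) :
    cI H (insert e0 L0) v = cI H L0 v := by
  refine card_pred_congr fun e => ?_
  simp only [Set.mem_insert_iff]
  constructor
  · rintro ⟨(rfl | hm), hs⟩
    · exact absurd hs.symm hv
    · exact ⟨hm, hs⟩
  · rintro ⟨hm, hs⟩
    exact ⟨Or.inr hm, hs⟩

lemma phi_surjective (hst : H.src e0 ≠ H.tgt e0)
    (hcc : H.degOut (H.src e0) = 1 ∨ H.degIn (H.tgt e0) = 1)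
    {M : Set (H.contract e0).E} (hM : (H.contract e0).IsLinear M) :
    ∃ L : Set H.E, H.IsLinear L ∧ phiSet H e0 L = M := by
  classical
  set L0 : Set H.E := Subtype.val '' M with hL0
  have he0L0 : e0 ∉ L0 := by
    rintro ⟨⟨e, hne⟩, -, h⟩
    exact hne h
  have hphi0 : phiSet H e0 L0 = M := by
    ext e
    rw [mem_phiSet, hL0]; exact Subtype.val_injective.mem_set_image
  rw [← hphi0] at hM
  have hoff : ∀ v, v ≠ H.src e0 → v ≠ H.tgt e0 →
      cO H L0 v = cI H L0 v ∧ cO H L0 v ≤ 1 := by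
    intro v h1 h2
    have h3 := isLinear_iff.mp hM (Quot.mk _ v)
    rwa [cO_contract_off L0 h1 h2, cI_contract_off L0 h1 h2] at h3
  have hmerge := isLinear_iff.mp hM (Quot.mk _ (H.src e0))
  rw [cO_contract_merge hst, cI_contract_merge hst,
    card_no_erase (fun h => he0L0 h.1), card_no_erase (fun h => he0L0 h.1)] at hmerge
  have e1 : Nat.card {x : H.E // x ∈ L0 ∧ H.src x = H.src e0} = cO H L0 (H.src e0) := rfl
  have e2 : Nat.card {x : H.E // x ∈ L0 ∧ H.tgt x = H.tgt e0} = cI H L0 (H.tgt e0) := rfl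
  rw [e1, e2] at hmerge
  by_cases hcond : 1 ≤ cI H L0 (H.src e0) ∧ cO H L0 (H.src e0) = 0
  · -- add e0 back
    refine ⟨insert e0 L0, ?_, ?_⟩
    · have hnum : cI H L0 (H.src e0) = 1 ∧ cI H L0 (H.tgt e0) = 0 ∧
          cO H L0 (H.tgt e0) = 1 := by omega
      intro v
      show cO H (insert e0 L0) v = cI H (insert e0 L0) v ∧ cO H (insert e0 L0) v ≤ 1
      by_cases hvs : v = H.src e0
      · subst hvs
        rw [cO_insert_self he0L0, cI_insert_off hst]
        omega
      by_cases hvt : v = H.tgt e0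
      · subst hvt
        rw [cO_insert_off (Ne.symm hst), cI_insert_self he0L0]
        omega
      · rw [cO_insert_off hvs, cI_insert_off hvt]
        exact hoff v hvs hvt
    · ext e
      rw [mem_phiSet, Set.mem_insert_iff, ← hphi0, mem_phiSet]
      exact ⟨fun h => h.resolve_left e.2, fun h => Or.inr h⟩
  · refine ⟨L0, ?_, hphi0⟩
    have hcond' : cI H L0 (H.src e0) = 0 ∨ 1 ≤ cO H L0 (H.src e0) := by omega
    have hnum : (cO H L0 (H.src e0) = cI H L0 (H.src e0) ∧ cO H L0 (H.src e0) ≤ 1) ∧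
        (cO H L0 (H.tgt e0) = cI H L0 (H.tgt e0) ∧ cO H L0 (H.tgt e0) ≤ 1) := by
      rcases hcc with hd | hd
      · have h5 : cO H L0 (H.src e0) = 0 := card_eq_zero_of_empty
          (fun ⟨⟨e, heL, hse⟩⟩ => he0L0 ((src_eq_e0 hd hse) ▸ heL))
        omega
      · have h5 : cI H L0 (H.tgt e0) = 0 := card_eq_zero_of_empty
          (fun ⟨⟨e, heL, hse⟩⟩ => he0L0 ((tgt_eq_e0 hd hse) ▸ heL))
        omega
    intro v
    show cO H L0 v = cI H L0 v ∧ cO H L0 v ≤ 1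
    by_cases hvs : v = H.src e0
    · subst hvs; exact hnum.1
    by_cases hvt : v = H.tgt e0
    · subst hvt; exact hnum.2
    · exact hoff v hvs hvt

lemma mem_supp_src {G : MDigraph} {L : Set G.E} {e : G.E} (he : e ∈ L) :
    G.src e ∈ G.supp L := ⟨e, he, Or.inl rfl⟩

lemma mem_supp_tgt {G : MDigraph} {L : Set G.E} {e : G.E} (he : e ∈ L) :
    G.tgt e ∈ G.supp L := ⟨e, he, Or.inr rfl⟩

/-- The relation whose quotient counts components. -/
def suppRel (G : MDigraph) (L : Set G.E) : G.supp L → G.supp L → Prop :=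
  fun a b => G.LAdj L a.1 b.1

lemma components_def (G : MDigraph) (L : Set G.E) :
    G.components L = Nat.card (Quot (suppRel G L)) := rfl

lemma supp_unique (hcc : H.degOut (H.src e0) = 1 ∨ H.degIn (H.tgt e0) = 1)
    {L : Set H.E} (hL : H.IsLinear L) (he0 : e0 ∉ L) :
    ∀ a ∈ H.supp L, (a = H.src e0 ∨ a = H.tgt e0) →
    ∀ b ∈ H.supp L, (b = H.src e0 ∨ b = H.tgt e0) → a = b := by
  have hnot : (H.src e0 ∉ H.supp L) ∨ (H.tgt e0 ∉ H.supp L) := by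
    rcases hcc with hd | hd
    · left
      rintro ⟨e, heL, (hse | hte)⟩
      · exact he0 (src_eq_e0 hd hse ▸ heL)
      · have h1 : 1 ≤ cO H L (H.src e0) := by
          rw [(isLinear_iff.mp hL (H.src e0)).1]
          exact cI_pos_of_mem heL hte
        obtain ⟨f, hfL, hfs⟩ := exists_src_of_pos h1
        exact he0 (src_eq_e0 hd hfs ▸ hfL)
    · right
      rintro ⟨e, heL, (hse | hte)⟩
      · have h1 : 1 ≤ cI H L (H.tgt e0) := by
          rw [← (isLinear_iff.mp hL (H.tgt e0)).1]
          exact cO_pos_of_mem heL hse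
        obtain ⟨f, hfL, hfs⟩ := exists_tgt_of_pos h1
        exact he0 (tgt_eq_e0 hd hfs ▸ hfL)
      · exact he0 (tgt_eq_e0 hd hte ▸ heL)
  intro a ha hab b hb hbb
  rcases hnot with h | h
  · rcases hab with rfl | rfl
    · exact absurd ha h
    · rcases hbb with rfl | rfl
      · exact absurd hb h
      · rfl
  · rcases hab with rfl | rfl
    · rcases hbb with rfl | rfl
      · rfl
      · exact absurd hb h
    · exact absurd ha h

lemma components_phi (hst : H.src e0 ≠ H.tgt e0)
    (hcc : H.degOut (H.src e0) = 1 ∨ H.degIn (H.tgt e0) = 1)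
    {L : Set H.E} (hL : H.IsLinear L) :
    H.components L = (H.contract e0).components (phiSet H e0 L) := by
  classical
  set M := phiSet H e0 L with hMdef
  have supp_mk : ∀ a : H.V, a ∈ H.supp L →
      Quot.mk (H.mergeRel e0) a ∈ (H.contract e0).supp M := by
    rintro a ⟨e, heL, hor⟩
    by_cases hee : e = e0
    · rw [hee] at heL hor
      rcases hor with hse | hte
      · have h1 : 1 ≤ cI H L (H.src e0) := by
          rw [← (isLinear_iff.mp hL (H.src e0)).1]
          exact cO_pos_of_mem heL rfl
        obtain ⟨f, hfL, hft⟩ := exists_tgt_of_pos h1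
        have hfne : f ≠ e0 := by intro h; rw [h] at hft; exact hst hft.symm
        exact ⟨⟨f, hfne⟩, hfL, Or.inr (by
          show Quot.mk (H.mergeRel e0) _ = _; exact congrArg _ (hft.trans hse))⟩
      · have h1 : 1 ≤ cO H L (H.tgt e0) := by
          rw [(isLinear_iff.mp hL (H.tgt e0)).1]
          exact cI_pos_of_mem heL rfl
        obtain ⟨g, hgL, hgs⟩ := exists_src_of_pos h1
        have hgne : g ≠ e0 := by intro h; rw [h] at hgs; exact hst hgs
        exact ⟨⟨g, hgne⟩, hgL, Or.inl (by
          show Quot.mk (H.mergeRel e0) _ = _; exact congrArg _ (hgs.trans hte))⟩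
    · refine ⟨⟨e, hee⟩, heL, ?_⟩
      rcases hor with h | h
      · exact Or.inl (by show Quot.mk (H.mergeRel e0) _ = _; exact congrArg _ h)
      · exact Or.inr (by show Quot.mk (H.mergeRel e0) _ = _; exact congrArg _ h)
  have bridge : ∀ (x y : H.supp L), H.mergeRel e0 x.1 y.1 →
      Quot.mk (suppRel H L) x = Quot.mk (suppRel H L) y := by
    rintro x y (heq | ⟨hx, hy⟩)
    · exact congrArg _ (Subtype.ext heq)
    · by_cases he0 : e0 ∈ L
      · rcases hx with hx | hx <;> rcases hy with hy | hy
        · exact congrArg _ (Subtype.ext (hx.trans hy.symm))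
        · exact Quot.sound ⟨e0, he0, hx.symm, hy.symm⟩
        · exact (Quot.sound ⟨e0, he0, hy.symm, hx.symm⟩).symm
        · exact congrArg _ (Subtype.ext (hx.trans hy.symm))
      · exact congrArg _ (Subtype.ext
          (supp_unique hcc hL he0 x.1 x.2 hx y.1 y.2 hy))
  have wd : ∀ a b : H.supp L, suppRel H L a b →
      Quot.mk (suppRel (H.contract e0) M) ⟨Quot.mk (H.mergeRel e0) a.1, supp_mk a.1 a.2⟩ =
      Quot.mk (suppRel (H.contract e0) M) ⟨Quot.mk (H.mergeRel e0) b.1, supp_mk b.1 b.2⟩ := by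
    rintro a b ⟨e, heL, hsrc, htgt⟩
    by_cases hee : e = e0
    · subst hee
      exact congrArg _ (Subtype.ext (mk_merge_eq.mpr
        (Or.inr ⟨Or.inl hsrc.symm, Or.inr htgt.symm⟩)))
    · refine Quot.sound ⟨⟨e, hee⟩, heL, ?_, ?_⟩
      · show Quot.mk (H.mergeRel e0) _ = _; exact congrArg _ hsrc
      · show Quot.mk (H.mergeRel e0) _ = _; exact congrArg _ htgt
  rw [components_def, components_def]
  refine Nat.card_eq_of_bijective
    (Quot.lift (fun a : H.supp L =>
      Quot.mk (suppRel (H.contract e0) M) ⟨Quot.mk (H.mergeRel e0) a.1, supp_mk a.1 a.2⟩) wd)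
    ⟨?_, ?_⟩
  · -- injective
    have key : ∀ (q q' : (H.contract e0).supp M), EqvGen (suppRel (H.contract e0) M) q q' →
        ∀ (a b : H.supp L), Quot.mk (H.mergeRel e0) a.1 = q.1 →
          Quot.mk (H.mergeRel e0) b.1 = q'.1 →
          Quot.mk (suppRel H L) a = Quot.mk (suppRel H L) b := by
      intro q q' h
      induction h with
      | rel x y hxy =>
        obtain ⟨e, heM, hsc, htc⟩ := hxy
        intro a b ha hb
        have heL : e.1 ∈ L := heM
        have hx : Quot.mk (H.mergeRel e0) (H.src e.1) = x.1 := hsc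
        have hy : Quot.mk (H.mergeRel e0) (H.tgt e.1) = y.1 := htc
        calc Quot.mk (suppRel H L) a
            = Quot.mk (suppRel H L) ⟨H.src e.1, mem_supp_src heL⟩ :=
              bridge _ _ (mk_merge_eq.mp (ha.trans hx.symm))
          _ = Quot.mk (suppRel H L) ⟨H.tgt e.1, mem_supp_tgt heL⟩ :=
              Quot.sound ⟨e.1, heL, rfl, rfl⟩
          _ = Quot.mk (suppRel H L) b :=
              bridge _ _ (mk_merge_eq.mp (hy.trans hb.symm))
      | refl x =>
        intro a b ha hb
        exact bridge _ _ (mk_merge_eq.mp (ha.trans hb.symm))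
      | symm x y _ ih =>
        intro a b ha hb
        exact (ih b a hb ha).symm
      | trans x y z _ _ ih1 ih2 =>
        intro a b ha hb
        obtain ⟨e, heM, hor⟩ := y.2
        have heL : e.1 ∈ L := heM
        rcases hor with hsc | htc
        · have hw : Quot.mk (H.mergeRel e0) (H.src e.1) = y.1 := hsc
          exact (ih1 a ⟨H.src e.1, mem_supp_src heL⟩ ha hw).trans
            (ih2 ⟨H.src e.1, mem_supp_src heL⟩ b hw hb)
        · have hw : Quot.mk (H.mergeRel e0) (H.tgt e.1) = y.1 := htc
          exact (ih1 a ⟨H.tgt e.1, mem_supp_tgt heL⟩ ha hw).trans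
            (ih2 ⟨H.tgt e.1, mem_supp_tgt heL⟩ b hw hb)
    intro x y
    induction x using Quot.ind with | _ a =>
    induction y using Quot.ind with | _ b =>
    intro h
    exact key _ _ (Quot.eq.mp h) a b rfl rfl
  · -- surjective
    intro q
    induction q using Quot.ind with | _ a =>
    obtain ⟨e, heM, hor⟩ := a.2
    have heL : e.1 ∈ L := heM
    rcases hor with hsc | htc
    · refine ⟨Quot.mk (suppRel H L) ⟨H.src e.1, mem_supp_src heL⟩, ?_⟩
      exact congrArg _ (Subtype.ext hsc)
    · refine ⟨Quot.mk (suppRel H L) ⟨H.tgt e.1, mem_supp_tgt heL⟩, ?_⟩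
      exact congrArg _ (Subtype.ext htc)

end Beta

end MDigraph

/-- For any constant `C`, the sum `β_C(H) = Σ_{L linear} C^{p(L)}` is
invariant under contraction of a contractible edge of a semistable graph. -/
theorem betaC_invariant (R : Type*) [CommRing R] (C : R) (H : MDigraph)
    (hss : H.Semistable) (e0 : H.E) (hc : H.Contractible e0) :
    ∑ᶠ L : {L : Set H.E // H.IsLinear L}, C ^ H.components L.1 =
      ∑ᶠ L : {L : Set (H.contract e0).E // (H.contract e0).IsLinear L},
        C ^ (H.contract e0).components L.1 := by
  obtain ⟨hst, hcc⟩ := hc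
  refine finsum_eq_of_bijective
    (fun L : {L : Set H.E // H.IsLinear L} =>
      (⟨MDigraph.phiSet H e0 L.1, MDigraph.isLinear_phi hst hcc L.2⟩ :
        {L : Set (H.contract e0).E // (H.contract e0).IsLinear L}))
    ⟨?_, ?_⟩ ?_
  · intro L L' h
    exact Subtype.ext (MDigraph.phi_injective hst L.2 L'.2 (congrArg Subtype.val h))
  · intro M
    obtain ⟨L, hL, hphi⟩ := MDigraph.phi_surjective hst hcc M.2
    exact ⟨⟨L, hL⟩, Subtype.ext hphi⟩
  · intro L
    rw [MDigraph.components_phi hst hcc L.2]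
end
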